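/- (Explicit gradient formula) For a stochastic quantizer q with positive entries, the partial derivative of the induced mutual information I(X;Y_N) with respect to q_{νk} is ∂I/∂q_{νk} = ∑_x p(x, y_k) ln( p(x|ν) / p(x) ), where p(x|ν) = (∑_j p(x,y_j) q_{νj}) / (∑_j p(y_j) q_{νj}). -/

import Mathlib

open Real

/-- Marginal of X from the joint distribution P(x,y). -/
noncomputable def pX {Kx K : ℕ} (P : Fin Kx → Fin K → ℝ) (x : Fin Kx) : ℝ :=
  ∑ k, P x k

/-- Marginal of Y from the joint distribution P(x,y). -/
noncomputable def pY {Kx K : ℕ} (P : Fin Kx → Fin K → ℝ) (k : Fin K) : ℝ :=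
  ∑ x, P x k

/-- Joint distribution of (X, Y_N) induced by the quantizer q. -/
noncomputable def pXN {Kx K N : ℕ} (P : Fin Kx → Fin K → ℝ)
    (q : Fin N → Fin K → ℝ) (x : Fin Kx) (ν : Fin N) : ℝ :=
  ∑ k, P x k * q ν k

/-- Marginal of Y_N induced by the quantizer q and a distribution p on Y. -/
noncomputable def pN {K N : ℕ} (p : Fin K → ℝ) (q : Fin N → Fin K → ℝ) (ν : Fin N) : ℝ :=
  ∑ k, p k * q ν k

/-- Conditional entropy H(Y_N|Y). -/
noncomputable def Hcond {K N : ℕ} (p : Fin K → ℝ) (q : Fin N → Fin K → ℝ) : ℝ :=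
  -∑ k, p k * ∑ ν, q ν k * Real.log (q ν k)

/-- Mutual information I(Y;Y_N) induced by the quantizer q. -/
noncomputable def IYN {K N : ℕ} (p : Fin K → ℝ) (q : Fin N → Fin K → ℝ) : ℝ :=
  ∑ ν, ∑ k, q ν k * p k * Real.log (q ν k / pN p q ν)

/-- Mutual information I(X;Y_N) induced by the quantizer q through X → Y → Y_N. -/
noncomputable def IXN {Kx K N : ℕ} (P : Fin Kx → Fin K → ℝ)
    (q : Fin N → Fin K → ℝ) : ℝ :=
  ∑ x, ∑ ν, pXN P q x ν * Real.log (pXN P q x ν / (pX P x * pN (pY P) q ν))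

/-- Mutual information I(X;Y). -/
noncomputable def IXY {Kx K : ℕ} (P : Fin Kx → Fin K → ℝ) : ℝ :=
  ∑ x, ∑ k, P x k * Real.log (P x k / (pX P x * pY P k))

/-- The set Δ of stochastic quantizers. -/
def Δset (N K : ℕ) : Set (Fin N → Fin K → ℝ) :=
  {q | (∀ ν k, 0 ≤ q ν k) ∧ ∀ k, ∑ ν, q ν k = 1}

/-- The (ambient-coordinate) gradient of I(X;Y_N): ∂I/∂q_{νk} = ∑_x p(x,y_k) ln(p(x|ν)/p(x)). -/
noncomputable def gradI {Kx K N : ℕ} (P : Fin Kx → Fin K → ℝ)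
    (q : Fin N → Fin K → ℝ) (ν : Fin N) (k : Fin K) : ℝ :=
  ∑ x, P x k * Real.log ((pXN P q x ν / pN (pY P) q ν) / pX P x)

theorem stmt18 {Kx K N : ℕ} (P : Fin Kx → Fin K → ℝ) (hP : ∀ x k, 0 < P x k)
    (q : Fin N → Fin K → ℝ) (hq : ∀ ν k, 0 < q ν k) (hsum : ∀ k, ∑ ν, q ν k = 1)
    (ν0 : Fin N) (k0 : Fin K) :
    HasDerivAt (fun t => IXN P (Function.update q ν0 (Function.update (q ν0) k0 t)))
      (gradI P q ν0 k0) (q ν0 k0) := by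
  rcases isEmpty_or_nonempty (Fin Kx) with hKx | hKx
  · simp only [IXN, gradI, Finset.univ_eq_empty, Finset.sum_empty]
    exact hasDerivAt_const _ _
  · set t0 := q ν0 k0 with ht0
    have hcpos : ∀ x, 0 < pX P x := fun x =>
      Finset.sum_pos (fun k _ => hP x k) ⟨k0, Finset.mem_univ k0⟩
    have hbpos : ∀ k, 0 < pY P k := fun k =>
      Finset.sum_pos (fun x _ => hP x k) Finset.univ_nonempty
    have hApos : ∀ x, 0 < pXN P q x ν0 := fun x =>
      Finset.sum_pos (fun k _ => mul_pos (hP x k) (hq ν0 k)) ⟨k0, Finset.mem_univ k0⟩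
    have hBpos : 0 < pN (pY P) q ν0 :=
      Finset.sum_pos (fun k _ => mul_pos (hbpos k) (hq ν0 k)) ⟨k0, Finset.mem_univ k0⟩
    set S : Fin Kx → ℝ := fun x => ∑ k ∈ Finset.univ.erase k0, P x k * q ν0 k with hS
    set SB : ℝ := ∑ k ∈ Finset.univ.erase k0, pY P k * q ν0 k with hSB
    have hAval : ∀ x, P x k0 * t0 + S x = pXN P q x ν0 := fun x => by
      exact
        Finset.add_sum_erase Finset.univ (fun k => P x k * q ν0 k) (Finset.mem_univ k0)
    have hBval : pY P k0 * t0 + SB = pN (pY P) q ν0 := by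
      exact
        Finset.add_sum_erase Finset.univ (fun k => pY P k * q ν0 k) (Finset.mem_univ k0)
    set C : ℝ := ∑ x, ∑ ν ∈ Finset.univ.erase ν0,
        pXN P q x ν * Real.log (pXN P q x ν / (pX P x * pN (pY P) q ν)) with hC
    have key : ∀ t, IXN P (Function.update q ν0 (Function.update (q ν0) k0 t))
        = (∑ x, (P x k0 * t + S x) *
            Real.log ((P x k0 * t + S x) / (pX P x * (pY P k0 * t + SB)))) + C := by
      intro t
      rw [IXN, hC, ← Finset.sum_add_distrib]
      refine Finset.sum_congr rfl fun x _ => ?_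
      rw [← Finset.add_sum_erase Finset.univ _ (Finset.mem_univ ν0)]
      have hupd : ∀ k, P x k * Function.update (q ν0) k0 t k
          = Function.update (fun k => P x k * q ν0 k) k0 (P x k0 * t) k := by
        intro k
        rcases eq_or_ne k k0 with rfl | hk
        · simp
        · simp [Function.update_of_ne hk]
      have hupdY : ∀ k, pY P k * Function.update (q ν0) k0 t k
          = Function.update (fun k => pY P k * q ν0 k) k0 (pY P k0 * t) k := by
        intro k
        rcases eq_or_ne k k0 with rfl | hk
        · simp
        · simp [Function.update_of_ne hk]
      have h1 : pXN P (Function.update q ν0 (Function.update (q ν0) k0 t)) x ν0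
          = P x k0 * t + S x := by
        rw [pXN]
        simp only [Function.update_self]
        simp_rw [hupd]
        rw [Finset.sum_update_of_mem (Finset.mem_univ k0), hS]
        simp [Finset.sdiff_singleton_eq_erase]
      have h2 : pN (pY P) (Function.update q ν0 (Function.update (q ν0) k0 t)) ν0
          = pY P k0 * t + SB := by
        rw [pN]
        simp only [Function.update_self]
        simp_rw [hupdY]
        rw [Finset.sum_update_of_mem (Finset.mem_univ k0), hSB]
        simp [Finset.sdiff_singleton_eq_erase]
      congr 1
      · rw [h1, h2]
      · refine Finset.sum_congr rfl fun ν hν => ?_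
        have hνne : ν ≠ ν0 := Finset.ne_of_mem_erase hν
        have h3 : pXN P (Function.update q ν0 (Function.update (q ν0) k0 t)) x ν
            = pXN P q x ν := by
          simp [pXN, Function.update_of_ne hνne]
        have h4 : pN (pY P) (Function.update q ν0 (Function.update (q ν0) k0 t)) ν
            = pN (pY P) q ν := by
          simp [pN, Function.update_of_ne hνne]
        rw [h3, h4]
    set D : Fin Kx → ℝ := fun x =>
      P x k0 * Real.log (pXN P q x ν0 / (pX P x * pN (pY P) q ν0))
        + (P x k0 - pXN P q x ν0 * pY P k0 / pN (pY P) q ν0) with hD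
    have hx : ∀ x ∈ Finset.univ, HasDerivAt
        (fun t => (P x k0 * t + S x) *
          Real.log ((P x k0 * t + S x) / (pX P x * (pY P k0 * t + SB)))) (D x) t0 := by
      intro x _
      have hA' : HasDerivAt (fun t => P x k0 * t + S x) (P x k0) t0 := by
        simpa using ((hasDerivAt_id t0).const_mul (P x k0)).add_const (S x)
      have hB' : HasDerivAt (fun t => pX P x * (pY P k0 * t + SB)) (pX P x * pY P k0) t0 := by
        simpa using (((hasDerivAt_id t0).const_mul (pY P k0)).add_const SB).const_mul (pX P x)
      have hBne : pX P x * (pY P k0 * t0 + SB) ≠ 0 := by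
        rw [hBval]; exact (mul_pos (hcpos x) hBpos).ne'
      have hu := hA'.div hB' hBne
      have hune : (P x k0 * t0 + S x) / (pX P x * (pY P k0 * t0 + SB)) ≠ 0 := by
        rw [hAval, hBval]
        exact (div_pos (hApos x) (mul_pos (hcpos x) hBpos)).ne'
      have hl := hu.log hune
      have := hA'.mul hl
      refine this.congr_deriv ?_
      symm
      simp only [Pi.div_apply]
      rw [hAval, hBval]
      congr 1
      have hAne := (hApos x).ne'
      have hBne2 := hBpos.ne'
      have hcne := (hcpos x).ne'
      field_simp
      have hcan : pN (pY P) q ν0 ^ 2 * (pN (pY P) q ν0)⁻¹ = pN (pY P) q ν0 := by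
        rw [sq, mul_inv_cancel_right₀ hBne2]
      linear_combination (-(pXN P q x ν0 * pY P k0)) * mul_inv_cancel₀ hBne2
    have hsum' : HasDerivAt
        (fun t => ∑ x, (P x k0 * t + S x) *
          Real.log ((P x k0 * t + S x) / (pX P x * (pY P k0 * t + SB))))
        (∑ x, D x) t0 := HasDerivAt.fun_sum hx
    have hsumA : ∑ x, pXN P q x ν0 = pN (pY P) q ν0 := by
      rw [pN]
      simp only [pXN, pY]
      rw [Finset.sum_comm]
      exact Finset.sum_congr rfl fun k _ => (Finset.sum_mul _ _ _).symm
    have hDsum : ∑ x, D x = gradI P q ν0 k0 := by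
      rw [gradI, hD]
      rw [Finset.sum_add_distrib, Finset.sum_sub_distrib]
      have h5 : ∑ x, pXN P q x ν0 * pY P k0 / pN (pY P) q ν0
          = ∑ x, P x k0 := by
        rw [← Finset.sum_div, ← Finset.sum_mul, hsumA,
          mul_comm, mul_div_assoc, div_self hBpos.ne', mul_one, pY]
      rw [h5, sub_self, add_zero]
      refine Finset.sum_congr rfl fun x _ => ?_
      rw [div_div, mul_comm (pN (pY P) q ν0) (pX P x)]
    have hfin := hsum'.add_const C
    rw [hDsum] at hfin
    have hfun : (fun t => IXN P (Function.update q ν0 (Function.update (q ν0) k0 t)))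
        = fun t => (∑ x, (P x k0 * t + S x) *
            Real.log ((P x k0 * t + S x) / (pX P x * (pY P k0 * t + SB)))) + C :=
      funext key
    rw [hfun]
    exact hfin
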